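/- Let α₀ ≠ 0, α₁, α₂ be real numbers with α₁/α₀ < 0 and α₂/α₀ > 0, and let V, C be p×p real matrices. For j ∈ ℤ and t ∈ ℝ define m_j(t) := ∫₀^∞ λ^j e^{jα₀t} · exp((α₁/α₀)λe^{α₀t} − (α₂/α₀)λ^{−1}e^{−α₀t}) · V · exp((log λ)·C) dλ. Then each m_j is differentiable in t and satisfies the nonisospectral moment evolution m_j′(t) = α₀ j m_j(t) + α₁ m_{j+1}(t) + α₂ m_{j−1}(t) for all j ∈ ℤ and t ∈ ℝ. -/

import Mathlib

open MeasureTheory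

/-- The moments
`m_j(t) := ∫₀^∞ λ^j e^{jα₀t} exp((α₁/α₀)λe^{α₀t} - (α₂/α₀)λ⁻¹e^{-α₀t}) V exp((log λ) C) dλ`,
defined entrywise as a Lebesgue integral over `(0,∞)`. -/
noncomputable def momInt (p : ℕ) (α₀ α₁ α₂ : ℝ) (V C : Matrix (Fin p) (Fin p) ℝ)
    (j : ℤ) (t : ℝ) : Matrix (Fin p) (Fin p) ℝ :=
  Matrix.of fun x y =>
    ∫ l in Set.Ioi (0 : ℝ),
      ((l ^ j * Real.exp ((j : ℝ) * α₀ * t) *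
          Real.exp (α₁ / α₀ * l * Real.exp (α₀ * t) -
            α₂ / α₀ * l⁻¹ * Real.exp (-(α₀ * t)))) •
        (V * NormedSpace.exp ((Real.log l) • C))) x y

section Aux



lemma aux_norm_exp_le {𝔸 : Type*} [NormedRing 𝔸] [NormedAlgebra ℝ 𝔸] [CompleteSpace 𝔸]
    [NormOneClass 𝔸] (x : 𝔸) : ‖NormedSpace.exp x‖ ≤ Real.exp ‖x‖ := by
  rw [NormedSpace.exp_eq_tsum ℝ]
  refine (norm_tsum_le_tsum_norm (NormedSpace.norm_expSeries_summable' x)).trans ?_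
  have hsum : Summable fun n : ℕ => ‖x‖ ^ n / (n.factorial : ℝ) :=
    Real.summable_pow_div_factorial ‖x‖
  have hterm : ∀ n : ℕ, ‖((n.factorial : ℝ))⁻¹ • x ^ n‖ ≤ ‖x‖ ^ n / (n.factorial : ℝ) := by
    intro n
    rw [norm_smul, norm_inv, Real.norm_natCast, div_eq_inv_mul]
    gcongr
    rcases Nat.eq_zero_or_pos n with h | h
    · simp [h]
    · exact norm_pow_le' x h
  refine ((NormedSpace.norm_expSeries_summable' x).tsum_le_tsum hterm hsum).trans ?_
  rw [Real.exp_eq_exp_ℝ, NormedSpace.exp_eq_tsum_div]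

lemma aux_entry_bound {p : ℕ} (hp : 1 ≤ p) (V C : Matrix (Fin p) (Fin p) ℝ) :
    ∃ K : ℝ, 1 ≤ K ∧ ∀ (s : ℝ) (x y : Fin p),
      |(V * NormedSpace.exp (s • C)) x y| ≤ K * Real.exp (K * |s|) := by
  haveI : Nonempty (Fin p) := ⟨⟨0, hp⟩⟩
  letI : SeminormedRing (Matrix (Fin p) (Fin p) ℝ) := Matrix.linftyOpSemiNormedRing
  letI : NormedRing (Matrix (Fin p) (Fin p) ℝ) := Matrix.linftyOpNormedRing
  letI : NormedAlgebra ℝ (Matrix (Fin p) (Fin p) ℝ) := Matrix.linftyOpNormedAlgebra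
  have hentry : ∀ (M : Matrix (Fin p) (Fin p) ℝ) (x y : Fin p), |M x y| ≤ ‖M‖ := by
    intro M x y
    have h1 : ‖M x y‖₊ ≤ ∑ k, ‖M x k‖₊ :=
      Finset.single_le_sum (f := fun k => ‖M x k‖₊) (fun i _ => zero_le) (Finset.mem_univ y)
    have h2 : (∑ k, ‖M x k‖₊) ≤ Finset.univ.sup fun i => ∑ k, ‖M i k‖₊ :=
      Finset.le_sup (f := fun i => ∑ k, ‖M i k‖₊) (Finset.mem_univ x)
    have := h1.trans h2
    rw [Matrix.linfty_opNorm_def]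
    exact_mod_cast this
  refine ⟨max 1 (max ‖V‖ ‖C‖), le_max_left _ _, fun s x y => ?_⟩
  set K := max 1 (max ‖V‖ ‖C‖) with hK
  have hVK : ‖V‖ ≤ K := le_max_of_le_right (le_max_left _ _)
  have hCK : ‖C‖ ≤ K := le_max_of_le_right (le_max_right _ _)
  calc |(V * NormedSpace.exp (s • C)) x y| ≤ ‖V * NormedSpace.exp (s • C)‖ :=
        hentry _ x y
    _ ≤ ‖V‖ * ‖NormedSpace.exp (s • C)‖ := norm_mul_le _ _
    _ ≤ K * Real.exp (K * |s|) := by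
        have h3 : ‖NormedSpace.exp (s • C)‖ ≤ Real.exp ‖s • C‖ := aux_norm_exp_le _
        have h4 : ‖s • C‖ = |s| * ‖C‖ := by rw [norm_smul, Real.norm_eq_abs]
        have h5 : Real.exp ‖s • C‖ ≤ Real.exp (K * |s|) := by
          rw [Real.exp_le_exp, h4]
          calc |s| * ‖C‖ ≤ |s| * K := by gcongr
            _ = K * |s| := mul_comm _ _
        exact mul_le_mul hVK (h3.trans h5) (norm_nonneg _) (le_trans zero_le_one (le_max_left _ _))



lemma aux_pow_mul_exp_neg_le (n : ℕ) {y : ℝ} (hy : 0 ≤ y) :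
    y ^ n * Real.exp (-y) ≤ (n : ℝ) ^ n := by
  rcases Nat.eq_zero_or_pos n with h | h
  · simp only [h, pow_zero, one_mul]
    exact Real.exp_le_one_iff.mpr (neg_nonpos.mpr hy)
  rcases eq_or_lt_of_le hy with rfl | hy'
  · simp only [zero_pow h.ne', zero_mul]
    positivity
  have hn : (0 : ℝ) < n := Nat.cast_pos.mpr h
  have hkey : (y / n) ^ n ≤ Real.exp y := by
    have h1 : y / n ≤ Real.exp (y / n) :=
      le_trans (le_add_of_nonneg_right zero_le_one) (Real.add_one_le_exp _)
    calc (y / n) ^ n ≤ Real.exp (y / n) ^ n :=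
          pow_le_pow_left₀ (div_nonneg hy hn.le) h1 n
      _ = Real.exp ((n : ℝ) * (y / n)) := (Real.exp_nat_mul _ n).symm
      _ = Real.exp y := by rw [mul_div_cancel₀ _ hn.ne']
  have hpos : (0 : ℝ) < (y / n) ^ n := pow_pos (div_pos hy' hn) n
  have h2 : Real.exp (-y) ≤ ((y / n) ^ n)⁻¹ := by
    rw [Real.exp_neg]
    exact inv_anti₀ hpos hkey
  calc y ^ n * Real.exp (-y) ≤ y ^ n * ((y / n) ^ n)⁻¹ :=
        mul_le_mul_of_nonneg_left h2 (pow_nonneg hy n)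
    _ = y ^ n * ((n : ℝ) ^ n / y ^ n) := by rw [div_pow, inv_div]
    _ = (n : ℝ) ^ n := by field_simp

lemma aux_exp_abs_log_le {r : ℝ} {M : ℕ} (h : r ≤ M) {l : ℝ} (hl : 0 < l) :
    Real.exp (r * |Real.log l|) ≤ l ^ M + l⁻¹ ^ M := by
  have h0 : Real.exp (r * |Real.log l|) ≤ Real.exp ((M : ℝ) * |Real.log l|) :=
    Real.exp_le_exp.mpr (mul_le_mul_of_nonneg_right h (abs_nonneg _))
  refine h0.trans ?_
  rw [Real.exp_nat_mul]
  rcases le_or_gt 1 l with h1 | h1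
  · rw [abs_of_nonneg (Real.log_nonneg h1), Real.exp_log hl]
    exact le_add_of_nonneg_right (by positivity)
  · rw [abs_of_nonpos (Real.log_nonpos hl.le h1.le), ← Real.log_inv, Real.exp_log (by positivity)]
    exact le_add_of_nonneg_left (by positivity)

lemma aux_master_integrable (M : ℕ) {c c' : ℝ} (hc : 0 < c) (hc' : 0 < c') :
    IntegrableOn (fun l : ℝ => (l ^ M + l⁻¹ ^ M) *
      (Real.exp (-(c * l)) * Real.exp (-(c' * l⁻¹)))) (Set.Ioi 0) := by
  have hsub : Set.Ioi (0:ℝ) ⊆ {0}ᶜ := fun x hx => ne_of_gt hx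
  have hsub1 : Set.Ioc (0:ℝ) 1 ⊆ {0}ᶜ := fun x hx => ne_of_gt hx.1
  have hsub2 : Set.Ioi (1:ℝ) ⊆ {0}ᶜ := fun x hx => ne_of_gt (lt_trans zero_lt_one hx)
  have hcont : ∀ s : Set ℝ, s ⊆ {0}ᶜ → ContinuousOn (fun l : ℝ => (l ^ M + l⁻¹ ^ M) *
      (Real.exp (-(c * l)) * Real.exp (-(c' * l⁻¹)))) s := by
    intro s hs
    have hinv : ContinuousOn (fun l : ℝ => l⁻¹) s := continuousOn_inv₀.mono hs
    exact ((continuousOn_pow M).add (hinv.pow M)).mul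
      (((continuousOn_id.const_smul c).neg.rexp).mul
        (((hinv.const_smul c').neg).rexp))
  -- bound on (0,1]
  have hIoc : IntegrableOn (fun l : ℝ => (l ^ M + l⁻¹ ^ M) *
      (Real.exp (-(c * l)) * Real.exp (-(c' * l⁻¹)))) (Set.Ioc 0 1) := by
    refine Integrable.mono' (integrableOn_const (C := 1 + (M : ℝ) ^ M * (c'⁻¹) ^ M)
      measure_Ioc_lt_top.ne)
      ((hcont _ hsub1).aestronglyMeasurable measurableSet_Ioc) ?_
    refine (ae_restrict_iff' measurableSet_Ioc).mpr (ae_of_all _ fun l hl => ?_)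
    obtain ⟨hl0, hl1⟩ := hl
    have hinv0 : (0:ℝ) < l⁻¹ := by positivity
    have he1 : Real.exp (-(c * l)) ≤ 1 := Real.exp_le_one_iff.mpr (neg_nonpos.mpr (by positivity))
    have he2 : Real.exp (-(c' * l⁻¹)) ≤ 1 := Real.exp_le_one_iff.mpr (neg_nonpos.mpr (by positivity))
    have hkey : l⁻¹ ^ M * Real.exp (-(c' * l⁻¹)) ≤ (M : ℝ) ^ M * (c'⁻¹) ^ M := by
      have := aux_pow_mul_exp_neg_le M (y := c' * l⁻¹) (by positivity)
      have heq : l⁻¹ ^ M = (c' * l⁻¹) ^ M * (c'⁻¹) ^ M := by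
        rw [← mul_pow]; congr 1; field_simp
      calc l⁻¹ ^ M * Real.exp (-(c' * l⁻¹))
          = (c' * l⁻¹) ^ M * Real.exp (-(c' * l⁻¹)) * (c'⁻¹) ^ M := by rw [heq]; ring
        _ ≤ (M : ℝ) ^ M * (c'⁻¹) ^ M := mul_le_mul_of_nonneg_right this (by positivity)
    rw [Real.norm_eq_abs, abs_of_nonneg (by positivity)]
    have hlM : l ^ M ≤ 1 := pow_le_one₀ hl0.le hl1
    calc (l ^ M + l⁻¹ ^ M) * (Real.exp (-(c * l)) * Real.exp (-(c' * l⁻¹)))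
        = l ^ M * (Real.exp (-(c * l)) * Real.exp (-(c' * l⁻¹)))
          + (l⁻¹ ^ M * Real.exp (-(c' * l⁻¹))) * Real.exp (-(c * l)) := by ring
      _ ≤ 1 * (1 * 1) + ((M : ℝ) ^ M * (c'⁻¹) ^ M) * 1 :=
          add_le_add (mul_le_mul hlM (mul_le_mul he1 he2 (Real.exp_pos _).le zero_le_one)
              (by positivity) zero_le_one)
            (mul_le_mul hkey he1 (Real.exp_pos _).le (by positivity))
      _ = 1 + (M : ℝ) ^ M * (c'⁻¹) ^ M := by ring
  -- bound on (1,∞)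
  have hIoi : IntegrableOn (fun l : ℝ => (l ^ M + l⁻¹ ^ M) *
      (Real.exp (-(c * l)) * Real.exp (-(c' * l⁻¹)))) (Set.Ioi 1) := by
    set D : ℝ := ((M + 2 : ℕ) : ℝ) ^ (M + 2) * (c⁻¹) ^ (M + 2) with hD
    have hint : IntegrableOn (fun l : ℝ => 2 * D * (l ^ 2)⁻¹) (Set.Ioi 1) := by
      refine ((integrableOn_Ioi_rpow_of_lt (a := (-2:ℝ)) (by norm_num) one_pos).congr_fun
        (fun l hl => ?_) measurableSet_Ioi).const_mul _
      have hl0 : (0:ℝ) < l := lt_trans zero_lt_one hl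
      rw [Real.rpow_neg hl0.le, show ((2:ℝ)) = ((2:ℕ):ℝ) by norm_num, Real.rpow_natCast]
    refine Integrable.mono' hint ((hcont _ hsub2).aestronglyMeasurable measurableSet_Ioi) ?_
    refine (ae_restrict_iff' measurableSet_Ioi).mpr (ae_of_all _ fun l hl => ?_)
    have hl1 : (1:ℝ) < l := hl
    have hl0 : (0:ℝ) < l := lt_trans zero_lt_one hl1
    have hinvle : l⁻¹ ^ M ≤ l ^ M := by
      have : l⁻¹ ≤ l := le_trans (inv_le_one_of_one_le₀ hl1.le) hl1.le
      exact pow_le_pow_left₀ (by positivity) this M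
    have hkey : l ^ M * Real.exp (-(c * l)) ≤ D * (l ^ 2)⁻¹ := by
      have hP := aux_pow_mul_exp_neg_le (M + 2) (y := c * l) (by positivity)
      have heq : l ^ (M + 2) = (c * l) ^ (M + 2) * (c⁻¹) ^ (M + 2) := by
        rw [← mul_pow]; congr 1; field_simp
      have h2 : l ^ (M + 2) * Real.exp (-(c * l)) ≤ D := by
        calc l ^ (M + 2) * Real.exp (-(c * l))
            = (c * l) ^ (M + 2) * Real.exp (-(c * l)) * (c⁻¹) ^ (M + 2) := by rw [heq]; ring
          _ ≤ D := by rw [hD]; exact mul_le_mul_of_nonneg_right hP (by positivity)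
      have h3 : l ^ M * Real.exp (-(c * l)) = l ^ (M + 2) * Real.exp (-(c * l)) * (l ^ 2)⁻¹ := by
        field_simp; ring
      rw [h3]
      exact mul_le_mul_of_nonneg_right h2 (by positivity)
    rw [Real.norm_eq_abs, abs_of_nonneg (by positivity)]
    have he2 : Real.exp (-(c' * l⁻¹)) ≤ 1 := Real.exp_le_one_iff.mpr (neg_nonpos.mpr (by positivity))
    calc (l ^ M + l⁻¹ ^ M) * (Real.exp (-(c * l)) * Real.exp (-(c' * l⁻¹)))
        ≤ (l ^ M + l ^ M) * (Real.exp (-(c * l)) * 1) :=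
          mul_le_mul (add_le_add le_rfl hinvle)
            (mul_le_mul le_rfl he2 (Real.exp_pos _).le (Real.exp_pos _).le)
            (by positivity) (by positivity)
      _ = 2 * (l ^ M * Real.exp (-(c * l))) := by ring
      _ ≤ 2 * (D * (l ^ 2)⁻¹) := mul_le_mul_of_nonneg_left hkey (by norm_num)
      _ = 2 * D * (l ^ 2)⁻¹ := by ring
  exact IntegrableOn.mono_set (hIoc.union hIoi)
    (fun x hx => (le_or_gt x 1).imp (fun h => ⟨hx, h⟩) id)

noncomputable def auxW (p : ℕ) (V C : Matrix (Fin p) (Fin p) ℝ) (x y : Fin p) (l : ℝ) : ℝ :=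
  (V * NormedSpace.exp ((Real.log l) • C)) x y

noncomputable def auxF (p : ℕ) (α₀ α₁ α₂ : ℝ) (V C : Matrix (Fin p) (Fin p) ℝ)
    (x y : Fin p) (k : ℤ) (t l : ℝ) : ℝ :=
  (l ^ k * Real.exp ((k : ℝ) * α₀ * t) *
      Real.exp (α₁ / α₀ * l * Real.exp (α₀ * t) - α₂ / α₀ * l⁻¹ * Real.exp (-(α₀ * t)))) *
    auxW p V C x y l

lemma momInt_apply (p : ℕ) (α₀ α₁ α₂ : ℝ) (V C : Matrix (Fin p) (Fin p) ℝ)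
    (k : ℤ) (t : ℝ) (x y : Fin p) :
    momInt p α₀ α₁ α₂ V C k t x y = ∫ l in Set.Ioi (0:ℝ), auxF p α₀ α₁ α₂ V C x y k t l := by
  simp only [momInt, auxF, auxW, Matrix.of_apply, Matrix.smul_apply, smul_eq_mul]

lemma auxW_continuousOn (p : ℕ) (V C : Matrix (Fin p) (Fin p) ℝ) (x y : Fin p) :
    ContinuousOn (auxW p V C x y) (Set.Ioi 0) := by
  have hexpC : Continuous fun s : ℝ => NormedSpace.exp (s • C) := by
    letI : SeminormedRing (Matrix (Fin p) (Fin p) ℝ) := Matrix.linftyOpSemiNormedRing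
    letI : NormedRing (Matrix (Fin p) (Fin p) ℝ) := Matrix.linftyOpNormedRing
    letI : NormedAlgebra ℝ (Matrix (Fin p) (Fin p) ℝ) := Matrix.linftyOpNormedAlgebra
    letI : NormedAlgebra ℚ (Matrix (Fin p) (Fin p) ℝ) := NormedAlgebra.restrictScalars ℚ ℝ _
    exact NormedSpace.exp_continuous.comp (continuous_id.smul continuous_const)
  have hentry : Continuous fun A : Matrix (Fin p) (Fin p) ℝ => (V * A) x y := by
    simp only [Matrix.mul_apply]
    exact continuous_finset_sum _ fun k _ =>
      continuous_const.mul ((continuous_apply y).comp (continuous_apply k))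
  have hlog : ContinuousOn Real.log (Set.Ioi 0) :=
    Real.continuousOn_log.mono (fun x hx => ne_of_gt hx)
  exact (hentry.comp hexpC).comp_continuousOn hlog

lemma auxF_continuousOn (p : ℕ) (α₀ α₁ α₂ : ℝ) (V C : Matrix (Fin p) (Fin p) ℝ)
    (x y : Fin p) (k : ℤ) (t : ℝ) :
    ContinuousOn (auxF p α₀ α₁ α₂ V C x y k t) (Set.Ioi 0) := by
  have hsub : Set.Ioi (0:ℝ) ⊆ {0}ᶜ := fun x hx => ne_of_gt hx
  have hinv : ContinuousOn (fun l : ℝ => l⁻¹) (Set.Ioi 0) := continuousOn_inv₀.mono hsub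
  refine ContinuousOn.mul (ContinuousOn.mul (ContinuousOn.mul
    ((continuousOn_zpow₀ k).mono hsub) continuousOn_const) ?_) (auxW_continuousOn p V C x y)
  exact (((continuousOn_id.const_smul (α₁ / α₀ : ℝ)).mul continuousOn_const).sub
    ((hinv.const_smul (α₂ / α₀ : ℝ)).mul continuousOn_const)).rexp

lemma auxF_hasDerivAt (p : ℕ) {α₀ : ℝ} (α₁ α₂ : ℝ) (hα₀ : α₀ ≠ 0)
    (V C : Matrix (Fin p) (Fin p) ℝ) (x y : Fin p) (j : ℤ) (t : ℝ) {l : ℝ} (hl : 0 < l) :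
    HasDerivAt (fun s => auxF p α₀ α₁ α₂ V C x y j s l)
      (α₀ * (j : ℝ) * auxF p α₀ α₁ α₂ V C x y j t l
        + α₁ * auxF p α₀ α₁ α₂ V C x y (j + 1) t l
        + α₂ * auxF p α₀ α₁ α₂ V C x y (j - 1) t l) t := by
  have e1 : HasDerivAt (fun t : ℝ => Real.exp (α₀ * t)) (Real.exp (α₀ * t) * α₀) t := by
    simpa using ((hasDerivAt_id t).const_mul α₀).exp
  have e2 : HasDerivAt (fun t : ℝ => Real.exp (-(α₀ * t))) (Real.exp (-(α₀ * t)) * -α₀) t := by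
    simpa using (((hasDerivAt_id t).const_mul α₀).neg).exp
  have e3 : HasDerivAt (fun t : ℝ => Real.exp ((j : ℝ) * α₀ * t))
      (Real.exp ((j : ℝ) * α₀ * t) * ((j : ℝ) * α₀)) t := by
    simpa using ((hasDerivAt_id t).const_mul ((j : ℝ) * α₀)).exp
  have hg : HasDerivAt (fun t : ℝ => α₁ / α₀ * l * Real.exp (α₀ * t)
        - α₂ / α₀ * l⁻¹ * Real.exp (-(α₀ * t)))
      (α₁ / α₀ * l * (Real.exp (α₀ * t) * α₀) - α₂ / α₀ * l⁻¹ * (Real.exp (-(α₀ * t)) * -α₀)) t :=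
    (e1.const_mul _).sub (e2.const_mul _)
  have hfull := (((e3.mul hg.exp).const_mul (l ^ j : ℝ)).mul_const (auxW p V C x y l))
  have h1 : (fun s => auxF p α₀ α₁ α₂ V C x y j s l) = fun s =>
      (l ^ j : ℝ) * (Real.exp ((j : ℝ) * α₀ * s) *
        Real.exp (α₁ / α₀ * l * Real.exp (α₀ * s) - α₂ / α₀ * l⁻¹ * Real.exp (-(α₀ * s)))) *
        auxW p V C x y l := by
    funext s; simp only [auxF]; ring
  rw [h1]
  refine hfull.congr_deriv ?_
  simp only [auxF]
  have hz1 : (l : ℝ) ^ (j + 1) = l ^ j * l := zpow_add_one₀ hl.ne' j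
  have hz2 : (l : ℝ) ^ (j - 1) = l ^ j * l⁻¹ := by
    rw [zpow_sub_one₀ hl.ne' j]
  have hc1 : (((j + 1 : ℤ) : ℝ)) * α₀ * t = (j : ℝ) * α₀ * t + α₀ * t := by push_cast; ring
  have hc2 : (((j - 1 : ℤ) : ℝ)) * α₀ * t = (j : ℝ) * α₀ * t + -(α₀ * t) := by push_cast; ring
  rw [hz1, hz2, hc1, hc2, Real.exp_add, Real.exp_add]
  have ha1 : α₁ / α₀ * α₀ = α₁ := div_mul_cancel₀ _ hα₀
  have ha2 : α₂ / α₀ * α₀ = α₂ := div_mul_cancel₀ _ hα₀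
  field_simp
  ring

lemma auxF_master (p : ℕ) (hp : 1 ≤ p) {α₀ : ℝ} (α₁ α₂ : ℝ) (hα₀ : α₀ ≠ 0)
    (h₁ : α₁ / α₀ < 0) (h₂ : 0 < α₂ / α₀) (V C : Matrix (Fin p) (Fin p) ℝ)
    (x y : Fin p) (j : ℤ) (t₀ : ℝ) :
    ∃ bd : ℝ → ℝ, IntegrableOn bd (Set.Ioi 0) ∧
      ∀ k : ℤ, |k| ≤ |j| + 1 → ∀ t ∈ Metric.ball t₀ 1, ∀ l ∈ Set.Ioi (0:ℝ),
        |auxF p α₀ α₁ α₂ V C x y k t l| ≤ bd l := by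
  obtain ⟨K, hK1, hKW⟩ := aux_entry_bound hp V C
  set T : ℝ := |t₀| + 1 with hT
  set J : ℝ := (j.natAbs : ℝ) + 1 with hJ
  set E₁ : ℝ := Real.exp (-(|α₀| * T)) with hE₁
  set c : ℝ := (-(α₁ / α₀)) * E₁ with hc
  set c' : ℝ := (α₂ / α₀) * E₁ with hc'
  have hcpos : 0 < c := mul_pos (neg_pos.mpr h₁) (Real.exp_pos _)
  have hc'pos : 0 < c' := mul_pos h₂ (Real.exp_pos _)
  set M : ℕ := j.natAbs + 1 + ⌈K⌉₊ with hM
  set A : ℝ := Real.exp (J * |α₀| * T) * K with hA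
  have hJK : J + K ≤ (M : ℝ) := by
    rw [hM, hJ]; push_cast
    have := Nat.le_ceil K
    linarith
  refine ⟨fun l => A * ((l ^ M + l⁻¹ ^ M) * (Real.exp (-(c * l)) * Real.exp (-(c' * l⁻¹)))),
    (aux_master_integrable M hcpos hc'pos).const_mul A, ?_⟩
  intro k hk t ht l hl
  have hl0 : (0:ℝ) < l := hl
  have hkJ : |(k : ℝ)| ≤ J := by
    have h : ((|k| : ℤ) : ℝ) ≤ ((|j| + 1 : ℤ) : ℝ) := Int.cast_le.mpr hk
    rw [Int.cast_abs] at h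
    refine h.trans ?_
    rw [hJ]
    push_cast
    rw [Nat.cast_natAbs]
    push_cast
    exact le_refl _
  have htT : |t| ≤ T := by
    have := Metric.mem_ball.mp ht
    rw [Real.dist_eq] at this
    have h2 : |t| - |t₀| ≤ |t - t₀| := abs_sub_abs_le_abs_sub t t₀
    rw [hT]; linarith
  have habs : |α₀ * t| ≤ |α₀| * T := by
    rw [abs_mul]
    exact mul_le_mul_of_nonneg_left htT (abs_nonneg _)
  have hY : E₁ ≤ Real.exp (α₀ * t) := by
    rw [hE₁, Real.exp_le_exp]
    linarith [neg_abs_le (α₀ * t)]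
  have hZ : E₁ ≤ Real.exp (-(α₀ * t)) := by
    rw [hE₁, Real.exp_le_exp]
    linarith [le_abs_self (α₀ * t)]
  have hX : Real.exp ((k : ℝ) * α₀ * t) ≤ Real.exp (J * |α₀| * T) := by
    rw [Real.exp_le_exp]
    calc (k : ℝ) * α₀ * t ≤ |(k : ℝ) * α₀ * t| := le_abs_self _
      _ = |(k : ℝ)| * |α₀ * t| := by rw [mul_assoc, abs_mul]
      _ ≤ J * (|α₀| * T) := mul_le_mul hkJ habs (abs_nonneg _) (by rw [hJ]; positivity)
      _ = J * |α₀| * T := by ring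
  have hSineq : α₁ / α₀ * l * Real.exp (α₀ * t) - α₂ / α₀ * l⁻¹ * Real.exp (-(α₀ * t))
      ≤ -(c * l) + -(c' * l⁻¹) := by
    have hS1 : α₁ / α₀ * l * Real.exp (α₀ * t) ≤ α₁ / α₀ * l * E₁ :=
      mul_le_mul_of_nonpos_left hY (mul_nonpos_of_nonpos_of_nonneg h₁.le hl0.le)
    have hS2 : α₂ / α₀ * l⁻¹ * E₁ ≤ α₂ / α₀ * l⁻¹ * Real.exp (-(α₀ * t)) :=
      mul_le_mul_of_nonneg_left hZ (by positivity)
    have e1 : -(c * l) = α₁ / α₀ * l * E₁ := by rw [hc]; ring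
    have e2 : -(c' * l⁻¹) = -(α₂ / α₀ * l⁻¹ * E₁) := by rw [hc']; ring
    linarith
  have hW : |auxW p V C x y l| ≤ K * Real.exp (K * |Real.log l|) := hKW (Real.log l) x y
  have hφpos : (0:ℝ) < l ^ k * Real.exp ((k : ℝ) * α₀ * t) *
      Real.exp (α₁ / α₀ * l * Real.exp (α₀ * t) - α₂ / α₀ * l⁻¹ * Real.exp (-(α₀ * t))) :=
    mul_pos (mul_pos (zpow_pos hl0 k) (Real.exp_pos _)) (Real.exp_pos _)
  have hzexp : (l : ℝ) ^ k = Real.exp ((k : ℝ) * Real.log l) := by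
    rw [← Real.log_zpow, Real.exp_log (zpow_pos hl0 k)]
  have h1 : Real.exp ((k : ℝ) * Real.log l + K * |Real.log l|) ≤ l ^ M + l⁻¹ ^ M := by
    refine le_trans (Real.exp_le_exp.mpr ?_) (aux_exp_abs_log_le hJK hl0)
    have hklog : (k : ℝ) * Real.log l ≤ J * |Real.log l| := by
      calc (k : ℝ) * Real.log l ≤ |(k : ℝ) * Real.log l| := le_abs_self _
        _ = |(k : ℝ)| * |Real.log l| := abs_mul _ _
        _ ≤ J * |Real.log l| := mul_le_mul_of_nonneg_right hkJ (abs_nonneg _)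
    rw [add_mul]
    linarith
  have hS : Real.exp (α₁ / α₀ * l * Real.exp (α₀ * t) - α₂ / α₀ * l⁻¹ * Real.exp (-(α₀ * t)))
      ≤ Real.exp (-(c * l)) * Real.exp (-(c' * l⁻¹)) := by
    rw [← Real.exp_add]
    exact Real.exp_le_exp.mpr hSineq
  calc |auxF p α₀ α₁ α₂ V C x y k t l|
      = (l ^ k * Real.exp ((k : ℝ) * α₀ * t) *
          Real.exp (α₁ / α₀ * l * Real.exp (α₀ * t) - α₂ / α₀ * l⁻¹ * Real.exp (-(α₀ * t)))) *
        |auxW p V C x y l| := by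
        rw [auxF, abs_mul, abs_of_pos hφpos]
    _ ≤ (l ^ k * Real.exp ((k : ℝ) * α₀ * t) *
          Real.exp (α₁ / α₀ * l * Real.exp (α₀ * t) - α₂ / α₀ * l⁻¹ * Real.exp (-(α₀ * t)))) *
        (K * Real.exp (K * |Real.log l|)) := mul_le_mul_of_nonneg_left hW hφpos.le
    _ = (Real.exp ((k : ℝ) * Real.log l) * Real.exp (K * |Real.log l|)) *
          Real.exp ((k : ℝ) * α₀ * t) *
          Real.exp (α₁ / α₀ * l * Real.exp (α₀ * t) - α₂ / α₀ * l⁻¹ * Real.exp (-(α₀ * t))) * K := by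
        rw [hzexp]; ring
    _ = Real.exp ((k : ℝ) * Real.log l + K * |Real.log l|) *
          Real.exp ((k : ℝ) * α₀ * t) *
          Real.exp (α₁ / α₀ * l * Real.exp (α₀ * t) - α₂ / α₀ * l⁻¹ * Real.exp (-(α₀ * t))) * K := by
        rw [Real.exp_add]
    _ ≤ (l ^ M + l⁻¹ ^ M) * Real.exp (J * |α₀| * T) *
          (Real.exp (-(c * l)) * Real.exp (-(c' * l⁻¹))) * K := by
        refine mul_le_mul_of_nonneg_right ?_ (le_trans zero_le_one hK1)
        exact mul_le_mul (mul_le_mul h1 hX (Real.exp_pos _).le (by positivity))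
          hS (Real.exp_pos _).le (by positivity)
    _ = A * ((l ^ M + l⁻¹ ^ M) * (Real.exp (-(c * l)) * Real.exp (-(c' * l⁻¹)))) := by
        rw [hA]; ring

end Aux

/-- the moments `m_j(t)` are differentiable in `t` and satisfy the
nonisospectral moment evolution `m_j' = α₀ j m_j + α₁ m_{j+1} + α₂ m_{j-1}`. -/
theorem statement16 {p : ℕ} (hp : 1 ≤ p) (α₀ α₁ α₂ : ℝ) (hα₀ : α₀ ≠ 0)
    (h₁ : α₁ / α₀ < 0) (h₂ : 0 < α₂ / α₀)
    (V C : Matrix (Fin p) (Fin p) ℝ) :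
    ∀ (j : ℤ) (t : ℝ) (x y : Fin p),
      HasDerivAt (fun s => momInt p α₀ α₁ α₂ V C j s x y)
        (((α₀ * (j : ℝ)) • momInt p α₀ α₁ α₂ V C j t
          + α₁ • momInt p α₀ α₁ α₂ V C (j + 1) t
          + α₂ • momInt p α₀ α₁ α₂ V C (j - 1) t) x y) t := by
  intro j t₀ x y
  have hj : |j| ≤ |j| + 1 := le_add_of_nonneg_right zero_le_one
  have hj1 : |j + 1| ≤ |j| + 1 := (abs_add_le j 1).trans (by norm_num)
  have hjm : |j - 1| ≤ |j| + 1 := by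
    calc |j - 1| = |j + (-1)| := by ring_nf
      _ ≤ |j| + |(-1 : ℤ)| := abs_add_le _ _
      _ = |j| + 1 := by norm_num
  -- integrability of auxF k s for any s and any |k| ≤ |j|+1
  have hint : ∀ k : ℤ, |k| ≤ |j| + 1 → ∀ s : ℝ,
      IntegrableOn (fun l => auxF p α₀ α₁ α₂ V C x y k s l) (Set.Ioi 0) := by
    intro k hk s
    obtain ⟨bd', hbd'int, hbd'⟩ := auxF_master p hp α₁ α₂ hα₀ h₁ h₂ V C x y j s
    refine hbd'int.mono' ((auxF_continuousOn p α₀ α₁ α₂ V C x y k s).aestronglyMeasurable (μ := volume)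
      measurableSet_Ioi) ?_
    refine (ae_restrict_iff' measurableSet_Ioi).mpr (ae_of_all _ fun l hl => ?_)
    rw [Real.norm_eq_abs]
    exact hbd' k hk s (Metric.mem_ball_self one_pos) l hl
  obtain ⟨bd, hbdint, hbd⟩ := auxF_master p hp α₁ α₂ hα₀ h₁ h₂ V C x y j t₀
  have hbd0 : ∀ l ∈ Set.Ioi (0:ℝ), 0 ≤ bd l := fun l hl =>
    (abs_nonneg _).trans (hbd j hj t₀ (Metric.mem_ball_self one_pos) l hl)
  have m1 := (auxF_continuousOn p α₀ α₁ α₂ V C x y j t₀).aestronglyMeasurable (μ := volume) measurableSet_Ioi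
  have m2 := (auxF_continuousOn p α₀ α₁ α₂ V C x y (j+1) t₀).aestronglyMeasurable (μ := volume) measurableSet_Ioi
  have m3 := (auxF_continuousOn p α₀ α₁ α₂ V C x y (j-1) t₀).aestronglyMeasurable (μ := volume) measurableSet_Ioi
  have mF' : AEStronglyMeasurable (fun l => α₀ * (j : ℝ) * auxF p α₀ α₁ α₂ V C x y j t₀ l
      + α₁ * auxF p α₀ α₁ α₂ V C x y (j + 1) t₀ l
      + α₂ * auxF p α₀ α₁ α₂ V C x y (j - 1) t₀ l) (volume.restrict (Set.Ioi 0)) :=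
    ((m1.const_mul _).add (m2.const_mul _)).add (m3.const_mul _)
  have iF1 : Integrable (fun l => α₀ * (j : ℝ) * auxF p α₀ α₁ α₂ V C x y j t₀ l)
      (volume.restrict (Set.Ioi 0)) := (hint j hj t₀).const_mul _
  have iF2 : Integrable (fun l => α₁ * auxF p α₀ α₁ α₂ V C x y (j + 1) t₀ l)
      (volume.restrict (Set.Ioi 0)) := (hint (j+1) hj1 t₀).const_mul _
  have iF3 : Integrable (fun l => α₂ * auxF p α₀ α₁ α₂ V C x y (j - 1) t₀ l)
      (volume.restrict (Set.Ioi 0)) := (hint (j-1) hjm t₀).const_mul _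
  have iF12 : Integrable (fun l => α₀ * (j : ℝ) * auxF p α₀ α₁ α₂ V C x y j t₀ l
      + α₁ * auxF p α₀ α₁ α₂ V C x y (j + 1) t₀ l) (volume.restrict (Set.Ioi 0)) := iF1.add iF2
  have key := hasDerivAt_integral_of_dominated_loc_of_deriv_le
    (F := fun t l => auxF p α₀ α₁ α₂ V C x y j t l)
    (F' := fun t l => α₀ * (j : ℝ) * auxF p α₀ α₁ α₂ V C x y j t l
        + α₁ * auxF p α₀ α₁ α₂ V C x y (j + 1) t l
        + α₂ * auxF p α₀ α₁ α₂ V C x y (j - 1) t l)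
    (μ := volume.restrict (Set.Ioi (0:ℝ))) (x₀ := t₀)
    (bound := fun l => (|α₀ * (j : ℝ)| + |α₁| + |α₂|) * bd l)
    (Metric.ball_mem_nhds t₀ one_pos)
    (Filter.Eventually.of_forall fun s =>
      (auxF_continuousOn p α₀ α₁ α₂ V C x y j s).aestronglyMeasurable measurableSet_Ioi)
    (hint j hj t₀)
    mF'
    ?_ (hbdint.const_mul _) ?_
  · -- conclude
    have hfun : (fun s => momInt p α₀ α₁ α₂ V C j s x y)
        = fun s => ∫ l in Set.Ioi (0:ℝ), auxF p α₀ α₁ α₂ V C x y j s l :=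
      funext fun s => momInt_apply p α₀ α₁ α₂ V C j s x y
    rw [hfun]
    refine key.2.congr_deriv ?_
    simp only [Matrix.add_apply, Matrix.smul_apply, smul_eq_mul, momInt_apply]
    rw [MeasureTheory.integral_add iF12 iF3, MeasureTheory.integral_add iF1 iF2,
      MeasureTheory.integral_const_mul, MeasureTheory.integral_const_mul,
      MeasureTheory.integral_const_mul]
  · -- bound
    refine (ae_restrict_iff' measurableSet_Ioi).mpr (ae_of_all _ fun l hl => ?_)
    intro t ht
    rw [Real.norm_eq_abs]
    calc |α₀ * (j : ℝ) * auxF p α₀ α₁ α₂ V C x y j t l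
          + α₁ * auxF p α₀ α₁ α₂ V C x y (j + 1) t l
          + α₂ * auxF p α₀ α₁ α₂ V C x y (j - 1) t l|
        ≤ |α₀ * (j : ℝ)| * |auxF p α₀ α₁ α₂ V C x y j t l|
          + |α₁| * |auxF p α₀ α₁ α₂ V C x y (j + 1) t l|
          + |α₂| * |auxF p α₀ α₁ α₂ V C x y (j - 1) t l| := by
          refine (abs_add_le _ _).trans (add_le_add ((abs_add_le _ _).trans (add_le_add ?_ ?_)) ?_) <;>
            rw [abs_mul]
      _ ≤ |α₀ * (j : ℝ)| * bd l + |α₁| * bd l + |α₂| * bd l := by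
          refine add_le_add (add_le_add ?_ ?_) ?_ <;>
            exact mul_le_mul_of_nonneg_left (hbd _ (by assumption) t ht l hl) (abs_nonneg _)
      _ = (|α₀ * (j : ℝ)| + |α₁| + |α₂|) * bd l := by ring
  · -- differentiability
    refine (ae_restrict_iff' measurableSet_Ioi).mpr (ae_of_all _ fun l hl => ?_)
    intro t ht
    exact auxF_hasDerivAt p α₁ α₂ hα₀ V C x y j t hl
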